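/- Let f(x) = (1/p)|x|^p on ℝ with p > 2, ε > 0, and initial point 0 < x_0 ≤ (2ε)^{-1/(p-2)}. The gradient descent iterates x_{k+1} = x_k - ε·sign(x_k)|x_k|^{p-1} satisfy x_k > 0 for all k and x_k ≥ (x_0^{-(p-2)} + (p-2) 2^{p-1} ε k)^{-1/(p-2)}; consequently f(x_k) ≥ (1/p)(x_0^{-(p-2)} + (p-2) 2^{p-1} ε k)^{-p/(p-2)}. -/

import Mathlib

open Real

/-- MVT-based bound: for `0 < q`, `0 < t ≤ 1/2`, `(1-t)^(-q) ≤ 1 + q·2^(q+1)·t`. -/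
lemma mvt_key (q t : ℝ) (hq : 0 < q) (ht : 0 < t) (ht2 : t ≤ 1 / 2) :
    (1 - t) ^ (-q) ≤ 1 + q * 2 ^ (q + 1) * t := by
  have h2 : ∀ s ∈ Set.Icc (0 : ℝ) t, (1 : ℝ) / 2 ≤ 1 - s := fun s hs => by
    have := hs.2; linarith
  obtain ⟨c, hc, hderiv⟩ := exists_hasDerivAt_eq_slope
    (fun s => (1 - s) ^ (-q)) (fun s => q * (1 - s) ^ (-q - 1)) ht
    (by
      apply ContinuousOn.rpow_const
      · fun_prop
      · intro s hs
        have := h2 s hs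
        exact Or.inl (by linarith))
    (fun s hs => by
      have hs' : (0 : ℝ) < 1 - s := by
        have := h2 s ⟨hs.1.le, hs.2.le⟩; linarith
      have h1 : HasDerivAt (fun u : ℝ => 1 - u) (-1) s := by
        simpa using (hasDerivAt_id s).const_sub 1
      have h2' := (Real.hasDerivAt_rpow_const (p := -q) (Or.inl hs'.ne')).comp s h1
      exact h2'.congr_deriv (by ring))
  have hc1 : 0 < c := hc.1
  have hc2 : c < t := hc.2
  have hchalf : (1 : ℝ) / 2 ≤ 1 - c := by linarith
  have hbound : (1 - c) ^ (-q - 1) ≤ 2 ^ (q + 1) := by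
    have h := Real.rpow_le_rpow_of_nonpos (by norm_num : (0 : ℝ) < 1 / 2) hchalf
      (by linarith : -q - 1 ≤ 0)
    calc (1 - c) ^ (-q - 1) ≤ ((1 : ℝ) / 2) ^ (-q - 1) := h
      _ = 2 ^ (q + 1) := by
          rw [one_div, ← Real.rpow_neg_one 2, ← Real.rpow_mul (by norm_num)]
          ring_nf
  have heq : (1 - t) ^ (-q) = 1 + q * (1 - c) ^ (-q - 1) * t := by
    field_simp at hderiv
    have h10 : ((1 : ℝ) - 0) ^ (-q) = 1 := by norm_num
    rw [h10, sub_zero, eq_div_iff ht.ne'] at hderiv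
    nlinarith [hderiv]
  rw [heq]
  have : q * (1 - c) ^ (-q - 1) * t ≤ q * 2 ^ (q + 1) * t := by
    apply mul_le_mul_of_nonneg_right _ ht.le
    exact mul_le_mul_of_nonneg_left hbound hq.le
  linarith

theorem gradient_descent_power_polynomial_rate
    (p ε : ℝ) (hp : 2 < p) (hε : 0 < ε)
    (x : ℕ → ℝ) (hx0 : 0 < x 0) (hx0' : x 0 ≤ (2 * ε) ^ (-(1 / (p - 2))))
    (hrec : ∀ k : ℕ, x (k + 1) = x k - ε * Real.sign (x k) * |x k| ^ (p - 1)) :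
    ∀ k : ℕ, 0 < x k ∧
      ((x 0) ^ (-(p - 2)) + (p - 2) * 2 ^ (p - 1) * ε * k) ^ (-(1 / (p - 2))) ≤ x k ∧
      (1 / p) * ((x 0) ^ (-(p - 2)) + (p - 2) * 2 ^ (p - 1) * ε * k) ^ (-(p / (p - 2))) ≤
        (1 / p) * |x k| ^ p := by
  have hq : 0 < p - 2 := by linarith
  have key : ∀ k : ℕ, 0 < x k ∧ x k ≤ x 0 ∧
      (x k) ^ (-(p - 2)) ≤ (x 0) ^ (-(p - 2)) + (p - 2) * 2 ^ (p - 1) * ε * k := by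
    intro k
    induction k with
    | zero => exact ⟨hx0, le_refl _, by simp⟩
    | succ n ih =>
      obtain ⟨hpos, hle, hbnd⟩ := ih
      set t := ε * (x n) ^ (p - 2) with ht_def
      have htpos : 0 < t := by positivity
      have hxle : x n ≤ (2 * ε) ^ (-(1 / (p - 2))) := le_trans hle hx0'
      have ht2 : t ≤ 1 / 2 := by
        have hb : (x n) ^ (p - 2) ≤ ((2 * ε) ^ (-(1 / (p - 2)))) ^ (p - 2) :=
          Real.rpow_le_rpow hpos.le hxle hq.le
        have he : ((2 * ε) ^ (-(1 / (p - 2)))) ^ (p - 2) = (2 * ε)⁻¹ := by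
          rw [← Real.rpow_mul (by positivity)]
          rw [show -(1 / (p - 2)) * (p - 2) = -1 by field_simp]
          exact Real.rpow_neg_one _
        have : t ≤ ε * (2 * ε)⁻¹ := by
          rw [ht_def]
          exact mul_le_mul_of_nonneg_left (hb.trans he.le) hε.le
        calc t ≤ ε * (2 * ε)⁻¹ := this
          _ = 1 / 2 := by field_simp
      have hx1 : x (n + 1) = x n * (1 - t) := by
        rw [hrec n, Real.sign_of_pos hpos, abs_of_pos hpos,
          show p - 1 = (p - 2) + 1 by ring, Real.rpow_add hpos, Real.rpow_one, ht_def]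
        ring
      have hpos' : 0 < x (n + 1) := by
        rw [hx1]; apply mul_pos hpos; linarith
      refine ⟨hpos', ?_, ?_⟩
      · rw [hx1]
        nlinarith
      · have hmul : (x (n + 1)) ^ (-(p - 2)) =
            (x n) ^ (-(p - 2)) * (1 - t) ^ (-(p - 2)) := by
          rw [hx1, Real.mul_rpow hpos.le (by linarith)]
        have hkey := mvt_key (p - 2) t hq htpos ht2
        rw [show p - 2 + 1 = p - 1 by ring] at hkey
        have hxq : (x n) ^ (-(p - 2)) * t = ε := by
          rw [ht_def, ← mul_assoc, mul_comm ((x n) ^ (-(p - 2))) ε, mul_assoc,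
            ← Real.rpow_add hpos]
          norm_num
        have hxqpos : (0 : ℝ) < (x n) ^ (-(p - 2)) := by positivity
        have h1 : (x (n + 1)) ^ (-(p - 2)) ≤
            (x n) ^ (-(p - 2)) * (1 + (p - 2) * 2 ^ (p - 1) * t) := by
          rw [hmul]
          exact mul_le_mul_of_nonneg_left hkey hxqpos.le
        have h2 : (x n) ^ (-(p - 2)) * (1 + (p - 2) * 2 ^ (p - 1) * t) =
            (x n) ^ (-(p - 2)) + (p - 2) * 2 ^ (p - 1) * ε := by
          have : (x n) ^ (-(p - 2)) * ((p - 2) * 2 ^ (p - 1) * t) =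
              (p - 2) * 2 ^ (p - 1) * ((x n) ^ (-(p - 2)) * t) := by ring
          rw [mul_add, mul_one, this, hxq]
        push_cast
        calc (x (n + 1)) ^ (-(p - 2)) ≤ (x n) ^ (-(p - 2)) + (p - 2) * 2 ^ (p - 1) * ε :=
              h1.trans_eq h2
          _ ≤ (x 0) ^ (-(p - 2)) + (p - 2) * 2 ^ (p - 1) * ε * ((n : ℝ) + 1) := by
              have hC : 0 < (p - 2) * 2 ^ (p - 1) * ε := by positivity
              nlinarith [hbnd]
  intro k
  obtain ⟨hpos, _, hbnd⟩ := key k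
  have hA : 0 < (x 0) ^ (-(p - 2)) + (p - 2) * 2 ^ (p - 1) * ε * k := by positivity
  have hB : ((x 0) ^ (-(p - 2)) + (p - 2) * 2 ^ (p - 1) * ε * k) ^ (-(1 / (p - 2))) ≤ x k := by
    have hxkq : (0 : ℝ) < (x k) ^ (-(p - 2)) := by positivity
    have h := Real.rpow_le_rpow_of_nonpos hxkq hbnd
      (by positivity |> neg_nonpos_of_nonneg : -(1 / (p - 2)) ≤ 0)
    calc ((x 0) ^ (-(p - 2)) + (p - 2) * 2 ^ (p - 1) * ε * k) ^ (-(1 / (p - 2)))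
        ≤ ((x k) ^ (-(p - 2))) ^ (-(1 / (p - 2))) := h
      _ = x k := by
          rw [← Real.rpow_mul hpos.le]
          rw [show -(p - 2) * -(1 / (p - 2)) = 1 by field_simp]
          exact Real.rpow_one _
  refine ⟨hpos, hB, ?_⟩
  have hBpos : 0 < ((x 0) ^ (-(p - 2)) + (p - 2) * 2 ^ (p - 1) * ε * k) ^ (-(1 / (p - 2))) :=
    Real.rpow_pos_of_pos hA _
  have hpow : (((x 0) ^ (-(p - 2)) + (p - 2) * 2 ^ (p - 1) * ε * k) ^ (-(1 / (p - 2)))) ^ p =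
      ((x 0) ^ (-(p - 2)) + (p - 2) * 2 ^ (p - 1) * ε * k) ^ (-(p / (p - 2))) := by
    rw [← Real.rpow_mul hA.le]
    congr 1
    field_simp
  rw [abs_of_pos hpos]
  have := Real.rpow_le_rpow hBpos.le hB (by linarith : (0 : ℝ) ≤ p)
  rw [hpow] at this
  have hp' : (0 : ℝ) ≤ 1 / p := by positivity
  exact mul_le_mul_of_nonneg_left this hp'
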